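/- Let Σ and Γ be alphabets, 𝕄 = (M,+,val,𝟘) a timed valuation monoid and h : Γ → Σ a mapping. If r : 𝕋Γ⁺ → M is a recognizable quantitative timed language over 𝕄, then the quantitative timed language h(r) : 𝕋Σ⁺ → M is also recognizable over 𝕄. -/

import Mathlib

open scoped NNReal Classical

/-! # Core definitions: timed automata and weighted timed automata -/

/-- Comparison operators ⋈ ∈ {<, ≤, =, ≥, >}. -/
inductive Cmp : Type
  | lt | le | eq | ge | gt
  deriving DecidableEq

/-- Evaluation of a comparison `r ⋈ c` for `r ∈ ℝ≥0` and `c ∈ ℕ`. -/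
def Cmp.eval : Cmp → ℝ≥0 → ℕ → Prop
  | .lt, r, c => r < (c : ℝ≥0)
  | .le, r, c => r ≤ (c : ℝ≥0)
  | .eq, r, c => r = (c : ℝ≥0)
  | .ge, r, c => (c : ℝ≥0) ≤ r
  | .gt, r, c => (c : ℝ≥0) < r

/-- Clock constraints over a set `C` of clocks: `True` or conjunctions of `x ⋈ c`. -/
inductive ClockConstraint (C : Type) : Type
  | tt : ClockConstraint C
  | atom : C → Cmp → ℕ → ClockConstraint C
  | conj : ClockConstraint C → ClockConstraint C → ClockConstraint C

/-- A clock valuation assigns a non-negative real to each clock. -/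
def ClockVal (C : Type) : Type := C → ℝ≥0

/-- Satisfaction of clock constraints. -/
def ClockConstraint.Sat {C : Type} (ν : ClockVal C) : ClockConstraint C → Prop
  | .tt => True
  | .atom x op c => op.eval (ν x) c
  | .conj φ ψ => φ.Sat ν ∧ ψ.Sat ν

/-- `ν + t`: add `t` to every clock. -/
def ClockVal.add {C : Type} (ν : ClockVal C) (t : ℝ≥0) : ClockVal C := fun x => ν x + t

/-- `ν[Λ := 0]`: reset the clocks in `Λ` to `0`. -/
noncomputable def ClockVal.reset {C : Type} (ν : ClockVal C) (Λ : Set C) : ClockVal C :=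
  fun x => if x ∈ Λ then 0 else ν x

/-- The clock valuation assigning `0` to every clock. -/
def ClockVal.zero {C : Type} : ClockVal C := fun _ => 0

/-- An edge of a timed automaton: an element of `L × Σ × Φ(C) × 2^C × L`. -/
structure Edge (L A C : Type) : Type where
  src : L
  label : A
  guard : ClockConstraint C
  reset : Set C
  dst : L

/-- A timed automaton over the alphabet `A`. -/
structure TimedAutomaton (A : Type) : Type 1 where
  L : Type
  C : Type
  finL : Finite L
  finC : Finite C
  I : Set L
  F : Set L
  E : Set (Edge L A C)
  finE : E.Finite

/-- A (non-empty finite) timed word over `A`. -/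
abbrev TimedWord (A : Type) : Type := { w : List (A × ℝ≥0) // w ≠ [] }

/-- `T.IsRunFrom ℓ ν w es` holds iff `es` is the sequence of edges of a run of `T`
reading the timed word `w`, starting in location `ℓ` with clock valuation `ν`,
and ending in a final location. -/
def TimedAutomaton.IsRunFrom {A : Type} (T : TimedAutomaton A) :
    T.L → ClockVal T.C → List (A × ℝ≥0) → List (Edge T.L A T.C) → Prop
  | ℓ, _, [], [] => ℓ ∈ T.F
  | ℓ, ν, (a, t) :: w, e :: es =>
      e ∈ T.E ∧ e.src = ℓ ∧ e.label = a ∧ e.guard.Sat (ν.add t) ∧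
      T.IsRunFrom e.dst ((ν.add t).reset e.reset) w es
  | _, _, [], _ :: _ => False
  | _, _, _ :: _, [] => False

/-- `Run_T(w)`: the set of runs (identified with their edge sequences) of `T` on `w`. -/
def TimedAutomaton.RunOn {A : Type} (T : TimedAutomaton A) (w : TimedWord A) :
    Set (List (Edge T.L A T.C)) :=
  { es | ∃ ℓ₀ ∈ T.I, T.IsRunFrom ℓ₀ ClockVal.zero w.1 es }

/-- `L(T)`: the timed language accepted by `T`. -/
def TimedAutomaton.Lang {A : Type} (T : TimedAutomaton A) : Set (TimedWord A) :=
  { w | (T.RunOn w).Nonempty }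

/-- A timed automaton is unambiguous if every timed word has at most one run. -/
def TimedAutomaton.Unambiguous {A : Type} (T : TimedAutomaton A) : Prop :=
  ∀ w : TimedWord A, (T.RunOn w).Subsingleton

/-- A timed automaton is deterministic if it has a single initial location and the guards of
any two distinct edges with the same source and label are jointly unsatisfiable. -/
def TimedAutomaton.Deterministic {A : Type} (T : TimedAutomaton A) : Prop :=
  (∃ ℓ, T.I = {ℓ}) ∧
  ∀ e₁ ∈ T.E, ∀ e₂ ∈ T.E, e₁.src = e₂.src → e₁.label = e₂.label → e₁ ≠ e₂ →
    ∀ ν : ClockVal T.C, ¬ (e₁.guard.Sat ν ∧ e₂.guard.Sat ν)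

/-- A timed automaton is sequential if it has a single initial location and any two edges
with the same source and label are equal. -/
def TimedAutomaton.Sequential {A : Type} (T : TimedAutomaton A) : Prop :=
  (∃ ℓ, T.I = {ℓ}) ∧
  ∀ e₁ ∈ T.E, ∀ e₂ ∈ T.E, e₁.src = e₂.src → e₁.label = e₂.label → e₁ = e₂

/-- A timed language is recognizable by a timed automaton satisfying `P`. -/
def TLRecognizableBy {A : Type} (P : TimedAutomaton A → Prop) (𝓛 : Set (TimedWord A)) : Prop :=
  ∃ T : TimedAutomaton A, P T ∧ T.Lang = 𝓛

/-- A weighted timed automaton over the alphabet `A` and (the domain `M` of) a timed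
valuation monoid: a timed automaton together with weights on locations and edges.
The timed valuation monoid itself is given by an `AddCommMonoid M` instance together with a
timed valuation function `val : List ((M × M) × ℝ≥0) → M` (only its values on non-empty
lists, i.e. on `𝕋(M×M)⁺`, ever matter). -/
structure WTA (A M : Type) extends TimedAutomaton A where
  wtL : L → M
  wtE : Edge L A C → M

/-- The timed word `wt♯(ρ) ∈ 𝕋(M×M)⁺` associated with a run: the `i`-th letter is
`((wt(ℓ_{i-1}), wt(e_i)), t_i)`, where `ℓ_{i-1}` is the source location of edge `e_i`. -/
def WTA.runWord {A M : Type} (W : WTA A M) (w : List (A × ℝ≥0))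
    (es : List (Edge W.L A W.C)) : List ((M × M) × ℝ≥0) :=
  List.zipWith (fun (p : A × ℝ≥0) e => ((W.wtL e.src, W.wtE e), p.2)) w es

/-- The behavior `‖W‖ : 𝕋A⁺ → M` of a WTA: `‖W‖(w) = Σ (val(wt♯(ρ)) : ρ ∈ Run_W(w))`,
the empty sum being `0` (the monoid unit `𝟘`). -/
noncomputable def WTA.behavior {A M : Type} [AddCommMonoid M]
    (val : List ((M × M) × ℝ≥0) → M) (W : WTA A M) (w : TimedWord A) : M :=
  ∑ᶠ es ∈ W.toTimedAutomaton.RunOn w, val (W.runWord w.1 es)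

/-- A quantitative timed language `r : 𝕋A⁺ → M` is recognizable over the timed valuation
monoid `(M, +, val, 𝟘)` by a WTA whose underlying timed automaton satisfies `P`. -/
def QTLRecognizableBy {A M : Type} [AddCommMonoid M] (val : List ((M × M) × ℝ≥0) → M)
    (P : TimedAutomaton A → Prop) (r : TimedWord A → M) : Prop :=
  ∃ W : WTA A M, P W.toTimedAutomaton ∧ ∀ w, W.behavior val w = r w

/-- Recognizability (no restriction on the underlying timed automaton). -/
def QTLRecognizable {A M : Type} [AddCommMonoid M] (val : List ((M × M) × ℝ≥0) → M)
    (r : TimedWord A → M) : Prop :=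
  ∃ W : WTA A M, ∀ w, W.behavior val w = r w

/-- Renaming of timed words along `h : Γ → A`. -/
def mapTimedWord {Γ A : Type} (h : Γ → A) (v : TimedWord Γ) : TimedWord A :=
  ⟨v.1.map (fun p => (h p.1, p.2)), by
    cases v with
    | mk l hl => cases l with
      | nil => exact absurd rfl hl
      | cons p l => simp⟩

/-- `h(r)(w) = Σ (r(v) : v ∈ 𝕋Γ⁺, h(v) = w)` (a finite sum when `Γ` is finite). -/
noncomputable def pushQTL {Γ A M : Type} [AddCommMonoid M] (h : Γ → A)
    (r : TimedWord Γ → M) (w : TimedWord A) : M :=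
  ∑ᶠ v ∈ { v : TimedWord Γ | mapTimedWord h v = w }, r v

/-- `(val ∘ g)(w) = val((g(a₁),t₁)…(g(aₙ),tₙ))`. -/
def valComp {A M : Type} (val : List ((M × M) × ℝ≥0) → M) (g : A → M × M)
    (w : TimedWord A) : M :=
  val (w.1.map (fun p => (g p.1, p.2)))

/-- The intersection `r ∩ 𝓛` of a quantitative timed language with a timed language. -/
noncomputable def interQTL {A M : Type} [Zero M] (r : TimedWord A → M)
    (𝓛 : Set (TimedWord A)) (w : TimedWord A) : M :=
  if w ∈ 𝓛 then r w else 0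

/-- Membership in the Nivat class `N^P(A, 𝕄)`: `𝕃 = h((val ∘ g) ∩ 𝓛)` for some alphabet `Γ`,
maps `h : Γ → A`, `g : Γ → M × M` and a timed language `𝓛` recognizable by a timed
automaton satisfying `P`. -/
def NivatMem {A M : Type} [AddCommMonoid M] (val : List ((M × M) × ℝ≥0) → M)
    (P : ∀ {Γ : Type}, TimedAutomaton Γ → Prop) (𝕃 : TimedWord A → M) : Prop :=
  ∃ (Γ : Type) (_ : Finite Γ) (_ : Nonempty Γ) (h : Γ → A) (g : Γ → M × M)
    (𝓛 : Set (TimedWord Γ)),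
      TLRecognizableBy P 𝓛 ∧ ∀ w, 𝕃 w = pushQTL h (interQTL (valComp val g) 𝓛) w

/-- Membership in the class `H^P(A, 𝕄)`: `𝕃 = h(r)` for some alphabet `Γ`, `h : Γ → A`
and a quantitative timed language `r` recognizable by a WTA whose underlying timed
automaton satisfies `P`. -/
def HMem {A M : Type} [AddCommMonoid M] (val : List ((M × M) × ℝ≥0) → M)
    (P : ∀ {Γ : Type}, TimedAutomaton Γ → Prop) (𝕃 : TimedWord A → M) : Prop :=
  ∃ (Γ : Type) (_ : Finite Γ) (_ : Nonempty Γ) (h : Γ → A) (r : TimedWord Γ → M),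
      QTLRecognizableBy val (fun T => P T) r ∧ ∀ w, 𝕃 w = pushQTL h r w

/-- Idempotency of a timed valuation monoid. -/
def IsIdempotent (M : Type) [Add M] : Prop := ∀ m : M, m + m = m

/-- Location-independence of a timed valuation function: the value of `val` on a non-empty
timed word over `M × M` depends only on the second components and the time stamps. -/
def LocIndep {M : Type} (val : List ((M × M) × ℝ≥0) → M) : Prop :=
  ∀ l l' : List ((M × M) × ℝ≥0), l ≠ [] →
    l.map (fun p => (p.1.2, p.2)) = l'.map (fun p => (p.1.2, p.2)) → val l = val l'


/-! ## Auxiliary definitions for the renaming construction -/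

section RenamingAux

variable {S Γ M : Type}

/-- Lift an edge along `h`, remembering the original label in the target location. -/
def liftEdge {L C : Type} (h : Γ → S) (γ : Γ) (e : Edge L Γ C) : Edge (L × Γ) S C :=
  ⟨(e.src, γ), h e.label, e.guard, e.reset, (e.dst, e.label)⟩

/-- Project a lifted edge back. -/
def projEdge {L C : Type} (e' : Edge (L × Γ) S C) : Edge L Γ C :=
  ⟨e'.src.1, e'.dst.2, e'.guard, e'.reset, e'.dst.1⟩

@[simp] lemma projEdge_liftEdge {L C : Type} (h : Γ → S) (γ : Γ) (e : Edge L Γ C) :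
    projEdge (liftEdge h γ e) = e := rfl

/-- Encode a sequence of edges, threading the previous label through. -/
def encList {L C : Type} (h : Γ → S) : Γ → List (Edge L Γ C) → List (Edge (L × Γ) S C)
  | _, [] => []
  | γ, e :: es => liftEdge h γ e :: encList h e.label es

lemma encList_map_proj {L C : Type} (h : Γ → S) :
    ∀ (γ : Γ) (es : List (Edge L Γ C)), (encList h γ es).map projEdge = es
  | _, [] => rfl
  | γ, e :: es => by simp [encList, encList_map_proj h e.label es]

lemma encList_injective {L C : Type} (h : Γ → S) (γ : Γ) :
    Function.Injective (encList (L := L) (C := C) h γ) := fun es₁ es₂ heq => by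
  have := congrArg (List.map projEdge) heq
  simpa [encList_map_proj] using this

lemma pairs_ext {α β : Type _} : ∀ (l₁ l₂ : List (α × β)),
    l₁.map Prod.fst = l₂.map Prod.fst → l₁.map Prod.snd = l₂.map Prod.snd → l₁ = l₂
  | [], [], _, _ => rfl
  | [], _ :: _, h1, _ => by simp at h1
  | _ :: _, [], h1, _ => by simp at h1
  | (a, b) :: l₁, (c, d) :: l₂, h1, h2 => by
      simp only [List.map_cons, List.cons.injEq] at h1 h2
      obtain ⟨rfl, h1⟩ := h1
      obtain ⟨rfl, h2⟩ := h2
      rw [pairs_ext l₁ l₂ h1 h2]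

lemma isRunFrom_facts {A : Type} (T : TimedAutomaton A) :
    ∀ (v : List (A × ℝ≥0)) (es : List (Edge T.L A T.C)) (ℓ : T.L) (ν : ClockVal T.C),
      T.IsRunFrom ℓ ν v es →
      es.length = v.length ∧ es.map Edge.label = v.map Prod.fst ∧ ∀ e ∈ es, e ∈ T.E
  | [], [], _, _, _ => ⟨rfl, rfl, by simp⟩
  | [], _ :: _, _, _, hr => hr.elim
  | _ :: _, [], _, _, hr => hr.elim
  | (a, t) :: v, e :: es, ℓ, ν, hr => by
      obtain ⟨hE, _, hlab, _, hrec⟩ := hr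
      obtain ⟨h1, h2, h3⟩ := isRunFrom_facts T v es _ _ hrec
      refine ⟨by simp [h1], by simp [hlab, h2], ?_⟩
      intro e' he'
      rcases List.mem_cons.1 he' with rfl | he'
      · exact hE
      · exact h3 e' he'

lemma finite_lists {X : Type} {s : Set X} (hs : s.Finite) (n : ℕ) :
    {l : List X | l.length = n ∧ ∀ x ∈ l, x ∈ s}.Finite := by
  have : Finite s := hs
  have h1 : {l : List s | l.length = n}.Finite := List.finite_length_eq _ n
  apply (h1.image (List.map Subtype.val)).subset
  rintro l ⟨hlen, hmem⟩
  refine ⟨(l.attach).map (fun x => (⟨x.1, hmem x.1 x.2⟩ : s)), ?_, ?_⟩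
  · simpa using hlen
  · simp [List.map_map, Function.comp]

lemma finite_runOn {A : Type} (T : TimedAutomaton A) (w : TimedWord A) :
    (T.RunOn w).Finite := by
  apply (finite_lists T.finE w.1.length).subset
  rintro es ⟨ℓ, _, hrun⟩
  obtain ⟨h1, _, h3⟩ := isRunFrom_facts T w.1 es _ _ hrun
  exact ⟨h1, h3⟩

variable [AddCommMonoid M]

/-- The relabeled weighted timed automaton. -/
noncomputable def liftWTA [Finite Γ] (h : Γ → S) (γ₀ : Γ) (W : WTA Γ M) : WTA S M where
  L := W.L × Γ
  C := W.C
  finL := by have := W.finL; exact inferInstance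
  finC := W.finC
  I := {p | p.1 ∈ W.I ∧ p.2 = γ₀}
  F := {p | p.1 ∈ W.F}
  E := ⋃ γ : Γ, liftEdge h γ '' W.E
  finE := Set.finite_iUnion fun γ => W.finE.image _
  wtL := fun p => W.wtL p.1
  wtE := fun e' => W.wtE (projEdge e')

lemma liftWTA_isRunFrom [Finite Γ] (h : Γ → S) (γ₀ : Γ) (W : WTA Γ M) :
    ∀ (es' : List (Edge (W.L × Γ) S W.C)) (w : List (S × ℝ≥0)) (ℓ : W.L) (γ : Γ)
      (ν : ClockVal W.C),
    (liftWTA h γ₀ W).toTimedAutomaton.IsRunFrom (ℓ, γ) ν w es' ↔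
      ∃ v es, v.map (fun p : Γ × ℝ≥0 => (h p.1, p.2)) = w ∧ es' = encList h γ es ∧
        W.toTimedAutomaton.IsRunFrom ℓ ν v es := by
  intro es'
  induction es' with
  | nil =>
    intro w ℓ γ ν
    cases w with
    | nil =>
      constructor
      · intro hF
        exact ⟨[], [], rfl, rfl, hF⟩
      · rintro ⟨v, es, hv, hes, hrun⟩
        cases v with
        | nil =>
          cases es with
          | nil => exact hrun
          | cons e es => exact hrun.elim
        | cons p v => simp at hv
    | cons a w =>
      constructor
      · intro hr; exact hr.elim
      · rintro ⟨v, es, hv, hes, hrun⟩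
        cases v with
        | nil => simp at hv
        | cons p v =>
          cases es with
          | nil => exact hrun.elim
          | cons e es => simp [encList] at hes
  | cons e' es'' ih =>
    intro w ℓ γ ν
    cases w with
    | nil =>
      constructor
      · intro hr; exact hr.elim
      · rintro ⟨v, es, hv, hes, hrun⟩
        cases v with
        | nil =>
          cases es with
          | nil => simp [encList] at hes
          | cons e es => exact hrun.elim
        | cons p v => simp at hv
    | cons at_ w =>
      obtain ⟨a, t⟩ := at_
      constructor
      · rintro ⟨hE, hsrc, hlab, hsat, hrec⟩
        obtain ⟨γ', e, heE, rfl⟩ : ∃ γ' e, e ∈ W.E ∧ liftEdge h γ' e = e' := by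
          obtain ⟨γ', he'⟩ := Set.mem_iUnion.1 hE; obtain ⟨e, heE, hee⟩ := he'; exact ⟨γ', e, heE, hee⟩
        have hsrc' : (e.src, γ') = (ℓ, γ) := hsrc
        have hsrc1 : e.src = ℓ := congrArg Prod.fst hsrc'
        have hsrc2 : γ' = γ := congrArg Prod.snd hsrc'
        subst hsrc2
        have hrec' := (ih w e.dst e.label _).1 hrec
        obtain ⟨v, es, hv, hes, hrun⟩ := hrec'
        refine ⟨(e.label, t) :: v, e :: es, ?_, ?_, ?_⟩
        · simp [hv]
          simpa [liftEdge] using hlab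
        · simp [encList, hes]
        · exact ⟨heE, hsrc1, rfl, hsat, hrun⟩
      · rintro ⟨v, es, hv, hes, hrun⟩
        cases v with
        | nil => simp at hv
        | cons p v =>
          obtain ⟨γ₁, t₁⟩ := p
          cases es with
          | nil => exact hrun.elim
          | cons e es =>
            simp only [List.map_cons, List.cons.injEq, Prod.mk.injEq] at hv
            obtain ⟨⟨hha, htt⟩, hv⟩ := hv
            simp only [encList, List.cons.injEq] at hes
            obtain ⟨rfl, hes⟩ := hes
            obtain ⟨heE, hsrc, hlab, hsat, hrec⟩ := hrun
            subst htt
            refine ⟨?_, ?_, ?_, ?_, ?_⟩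
            · exact Set.mem_iUnion.2 ⟨γ, ⟨e, heE, rfl⟩⟩
            · exact congrArg (fun x => (x, γ)) hsrc
            · simp [liftEdge, hlab, hha]
            · exact hsat
            · exact (ih w e.dst e.label _).2 ⟨v, es, hv, hes, hrec⟩

lemma runWord_encList [Finite Γ] (h : Γ → S) (γ₀ : Γ) (W : WTA Γ M) :
    ∀ (v : List (Γ × ℝ≥0)) (γ : Γ) (es : List (Edge W.L Γ W.C)),
    (liftWTA h γ₀ W).runWord (v.map fun p => (h p.1, p.2)) (encList h γ es) = W.runWord v es
  | [], _, _ => rfl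
  | _ :: _, _, [] => rfl
  | (a, t) :: v, γ, e :: es => by
      simp only [List.map_cons, encList, WTA.runWord, List.zipWith_cons_cons]
      refine congrArg₂ List.cons rfl ?_
      exact runWord_encList h γ₀ W v e.label es

end RenamingAux

/-- Lemma: closure under renaming. If `r : 𝕋Γ⁺ → M` is a recognizable
quantitative timed language over a timed valuation monoid `𝕄 = (M, +, val, 𝟘)` and
`h : Γ → Σ'` is a mapping, then `h(r) : 𝕋Σ'⁺ → M` is also recognizable over `𝕄`. -/
theorem recognizable_pushQTL {S Γ M : Type} [Finite S] [Nonempty S] [Finite Γ] [Nonempty Γ]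
    [AddCommMonoid M] (val : List ((M × M) × ℝ≥0) → M) (h : Γ → S)
    (r : TimedWord Γ → M) (hr : QTLRecognizable val r) :
    QTLRecognizable val (pushQTL h r) := by
  classical
  obtain ⟨W, hW⟩ := hr
  set γ₀ := Classical.arbitrary Γ with hγ₀
  refine ⟨liftWTA h γ₀ W, fun w => ?_⟩
  set fiber := {v : TimedWord Γ | mapTimedWord h v = w} with hfiber
  have hsnd : ∀ v ∈ fiber, v.1.map Prod.snd = w.1.map Prod.snd := by
    intro v hv
    have : v.1.map (fun p : Γ × ℝ≥0 => (h p.1, p.2)) = w.1 := congrArg Subtype.val hv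
    calc v.1.map Prod.snd
        = (v.1.map (fun p : Γ × ℝ≥0 => (h p.1, p.2))).map Prod.snd := by
          simp [List.map_map, Function.comp]
      _ = w.1.map Prod.snd := by rw [this]
  have hfibfin : fiber.Finite := by
    apply Set.Finite.of_finite_image (f := fun v : TimedWord Γ => v.1.map Prod.fst)
    · apply (List.finite_length_eq Γ w.1.length).subset
      rintro _ ⟨v, hv, rfl⟩
      have : v.1.map (fun p : Γ × ℝ≥0 => (h p.1, p.2)) = w.1 := congrArg Subtype.val hv
      simp only [Set.mem_setOf_eq, List.length_map]
      calc v.1.length = (v.1.map (fun p : Γ × ℝ≥0 => (h p.1, p.2))).length := by simp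
        _ = w.1.length := by rw [this]
    · intro v₁ hv₁ v₂ hv₂ heq
      apply Subtype.ext
      exact pairs_ext _ _ heq ((hsnd v₁ hv₁).trans (hsnd v₂ hv₂).symm)
  have hRun : (liftWTA h γ₀ W).toTimedAutomaton.RunOn w =
      ⋃ v ∈ fiber, encList h γ₀ '' (W.toTimedAutomaton.RunOn v) := by
    ext es'
    simp only [TimedAutomaton.RunOn, Set.mem_setOf_eq, Set.mem_iUnion, Set.mem_image]
    constructor
    · rintro ⟨⟨ℓ, γ⟩, ⟨hI1, hI2⟩, hrun⟩
      simp only at hI1 hI2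
      subst hI2
      obtain ⟨v, es, hv, hes, hrun'⟩ := (liftWTA_isRunFrom h γ₀ W es' w.1 ℓ γ₀ _).1 hrun
      have hvne : v ≠ [] := by
        intro hnil
        apply w.2
        rw [← hv, hnil, List.map_nil]
      refine Set.mem_iUnion₂.2 ⟨⟨v, hvne⟩, ?_, es, ⟨ℓ, hI1, hrun'⟩, hes.symm⟩
      exact Subtype.ext hv
    · intro hmem; obtain ⟨v, hv, es, ⟨ℓ, hI, hrun⟩, rfl⟩ := Set.mem_iUnion₂.1 hmem
      refine ⟨(ℓ, γ₀), ⟨hI, rfl⟩, ?_⟩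
      exact (liftWTA_isRunFrom h γ₀ W _ w.1 ℓ γ₀ _).2
        ⟨v.1, es, congrArg Subtype.val hv, rfl, hrun⟩
  have hdisj : fiber.PairwiseDisjoint
      (fun v : TimedWord Γ => encList h γ₀ '' (W.toTimedAutomaton.RunOn v)) := by
    intro v₁ hv₁ v₂ hv₂ hne
    rw [Function.onFun, Set.disjoint_left]
    rintro _ ⟨es₁, hes₁, rfl⟩ ⟨es₂, hes₂, heq⟩
    apply hne
    have hes : es₂ = es₁ := encList_injective h γ₀ heq
    subst hes
    obtain ⟨ℓ₁, _, hr₁⟩ := hes₁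
    obtain ⟨ℓ₂, _, hr₂⟩ := hes₂
    have f₁ := (isRunFrom_facts _ _ _ _ _ hr₁).2.1
    have f₂ := (isRunFrom_facts _ _ _ _ _ hr₂).2.1
    apply Subtype.ext
    exact pairs_ext _ _ (f₁.symm.trans f₂) ((hsnd v₁ hv₁).trans (hsnd v₂ hv₂).symm)
  calc (liftWTA h γ₀ W).behavior val w
      = ∑ᶠ es' ∈ ⋃ v ∈ fiber, encList h γ₀ '' (W.toTimedAutomaton.RunOn v),
          val ((liftWTA h γ₀ W).runWord w.1 es') := by
        rw [WTA.behavior, hRun]; rfl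
    _ = ∑ᶠ v ∈ fiber, ∑ᶠ es' ∈ encList h γ₀ '' (W.toTimedAutomaton.RunOn v),
          val ((liftWTA h γ₀ W).runWord w.1 es') :=
        finsum_mem_biUnion hdisj hfibfin
          (fun v _ => (finite_runOn _ v).image _)
    _ = ∑ᶠ v ∈ fiber, r v := by
        apply finsum_mem_congr rfl
        intro v hv
        rw [finsum_mem_image (fun es₁ _ es₂ _ he => encList_injective h γ₀ he)]
        rw [← hW v, WTA.behavior]
        apply finsum_mem_congr rfl
        intro es _
        have hv' : v.1.map (fun p : Γ × ℝ≥0 => (h p.1, p.2)) = w.1 := congrArg Subtype.val hv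
        rw [← hv']; exact congrArg val (runWord_encList h γ₀ W v.1 γ₀ es)
    _ = pushQTL h r w := rfl
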